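/- Let h : ℝ → ℝ be three times differentiable with L-Lipschitz continuous third derivative for some L > 0, and suppose h(1) − h(−1) − 2h'(−1) ≤ −A for some A ≥ 0. Then for any ρ ≥ 4, setting ρ' = √(ρ(ρ+2)) − 2, it holds that min{h(−1 − ρ), h(1 + ρ')} ≤ max{h(−1) − (A/4)ρ², h(1) − (A/6)ρ²} + (L/8)ρ⁴. -/

import Mathlib

open Set

private lemma poly_bound_aux (f g : ℝ → ℝ) (hfg : ∀ u, HasDerivAt f (g u) u)
    (h0 : f 0 = 0) (C : ℝ) (k : ℕ)
    (hb : ∀ u, 0 ≤ u → g u ≤ C * u ^ k) (t : ℝ) (ht : 0 ≤ t) :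
    f t ≤ C * t ^ (k + 1) / (k + 1) := by
  have hφ : ∀ u : ℝ, HasDerivAt (fun u : ℝ => C * u ^ (k + 1) / (k + 1) - f u)
      (C * u ^ k - g u) u := by
    intro u
    have h1 : HasDerivAt (fun u : ℝ => C * u ^ (k + 1) / (k + 1)) (C * u ^ k) u := by
      have h2 := (hasDerivAt_pow (k + 1) u).const_mul (C / (k + 1))
      convert h2 using 1
      · rfl
      · rfl
      · ext v; ring
      · have hk : ((k : ℝ) + 1) ≠ 0 := by positivity
        push_cast
        field_simp
    exact h1.sub (hfg u)
  have hmono : MonotoneOn (fun u : ℝ => C * u ^ (k + 1) / (k + 1) - f u) (Icc 0 t) := by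
    apply monotoneOn_of_deriv_nonneg (convex_Icc 0 t)
    · exact fun u _ => (hφ u).continuousAt.continuousWithinAt
    · exact fun u _ => (hφ u).differentiableAt.differentiableWithinAt
    · intro u hu
      rw [(hφ u).deriv]
      rw [interior_Icc] at hu
      have := hb u hu.1.le
      linarith
  have hle := hmono ⟨le_refl 0, ht⟩ ⟨ht, le_refl t⟩ ht
  simp only [h0, zero_pow (Nat.succ_ne_zero k), mul_zero, zero_div, sub_zero] at hle
  linarith

private lemma poly_bound (f g : ℝ → ℝ) (hfg : ∀ u, HasDerivAt f (g u) u)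
    (h0 : f 0 = 0) (C : ℝ) (k : ℕ)
    (hb : ∀ u, |g u| ≤ C * |u| ^ k) (t : ℝ) :
    |f t| ≤ C * |t| ^ (k + 1) / (k + 1) := by
  have main : ∀ (f g : ℝ → ℝ), (∀ u, HasDerivAt f (g u) u) → f 0 = 0 →
      (∀ u, |g u| ≤ C * |u| ^ k) → ∀ t : ℝ, 0 ≤ t → |f t| ≤ C * t ^ (k + 1) / (k + 1) := by
    intro f g hfg h0 hb t ht
    have hup : f t ≤ C * t ^ (k + 1) / (k + 1) := by
      apply poly_bound_aux f g hfg h0 C k _ t ht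
      intro u hu
      calc g u ≤ |g u| := le_abs_self _
        _ ≤ C * |u| ^ k := hb u
        _ = C * u ^ k := by rw [abs_of_nonneg hu]
    have hdn : -f t ≤ C * t ^ (k + 1) / (k + 1) := by
      apply poly_bound_aux (fun u => -f u) (fun u => -g u) (fun u => (hfg u).neg)
        (by simp [h0]) C k _ t ht
      intro u hu
      calc -g u ≤ |g u| := neg_le_abs _
        _ ≤ C * |u| ^ k := hb u
        _ = C * u ^ k := by rw [abs_of_nonneg hu]
    exact abs_le.mpr ⟨by linarith, hup⟩
  rcases le_or_gt 0 t with ht | ht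
  · rw [abs_of_nonneg ht]; exact main f g hfg h0 hb t ht
  · have hF : ∀ u : ℝ, HasDerivAt (fun u : ℝ => f (-u)) (-g (-u)) u := by
      intro u
      have := (hfg (-u)).comp u (hasDerivAt_neg u)
      simpa [Function.comp_def] using this
    have := main (fun u => f (-u)) (fun u => -g (-u)) hF (by simp [h0])
      (fun u => by simpa using hb (-u)) (-t) (by linarith)
    rw [abs_of_neg ht]
    simpa using this

private lemma taylor_third (h : ℝ → ℝ) (L : ℝ)
    (hd1 : Differentiable ℝ h) (hd2 : Differentiable ℝ (deriv h))
    (hd3 : Differentiable ℝ (deriv (deriv h)))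
    (hlip : ∀ ξ₁ ξ₂ : ℝ,
      |deriv (deriv (deriv h)) ξ₁ - deriv (deriv (deriv h)) ξ₂| ≤ L * |ξ₁ - ξ₂|)
    (x t : ℝ) :
    |h (x + t) - h x - deriv h x * t - deriv (deriv h) x * t ^ 2 / 2
      - deriv (deriv (deriv h)) x * t ^ 3 / 6| ≤ L * t ^ 4 / 24 := by
  set a := deriv h x with ha
  set b := deriv (deriv h) x with hb
  set c := deriv (deriv (deriv h)) x with hc
  have hshift : ∀ (F : ℝ → ℝ), Differentiable ℝ F → ∀ u : ℝ,
      HasDerivAt (fun v : ℝ => F (x + v)) (deriv F (x + u)) u := by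
    intro F hF u
    have := ((hF (x + u)).hasDerivAt).comp u ((hasDerivAt_id u).const_add x)
    simpa [Function.comp_def] using this
  set E3 : ℝ → ℝ := fun u => deriv (deriv (deriv h)) (x + u) - c with hE3def
  set E2 : ℝ → ℝ := fun u => deriv (deriv h) (x + u) - b - c * u with hE2def
  set E1 : ℝ → ℝ := fun u => deriv h (x + u) - a - b * u - c / 2 * u ^ 2 with hE1def
  set E0 : ℝ → ℝ := fun u => h (x + u) - h x - a * u - b / 2 * u ^ 2 - c / 6 * u ^ 3 with hE0def
  have hE2 : ∀ u, HasDerivAt E2 (E3 u) u := by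
    intro u
    have := ((hshift _ hd3 u).sub_const b).sub ((hasDerivAt_id u).const_mul c)
    convert this using 1
    · rfl
    · rfl
    · rfl
    simp [hE3def]
  have hE1 : ∀ u, HasDerivAt E1 (E2 u) u := by
    intro u
    have := (((hshift _ hd2 u).sub_const a).sub ((hasDerivAt_id u).const_mul b)).sub
      ((hasDerivAt_pow 2 u).const_mul (c / 2))
    convert this using 1
    · rfl
    · rfl
    · rfl
    simp [hE2def]; ring
  have hE0 : ∀ u, HasDerivAt E0 (E1 u) u := by
    intro u
    have := ((((hshift _ hd1 u).sub_const (h x)).sub ((hasDerivAt_id u).const_mul a)).sub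
      ((hasDerivAt_pow 2 u).const_mul (b / 2))).sub ((hasDerivAt_pow 3 u).const_mul (c / 6))
    convert this using 1
    · rfl
    · rfl
    · rfl
    simp [hE1def]; ring
  have b3 : ∀ u : ℝ, |E3 u| ≤ L * |u| ^ 1 := by
    intro u
    have := hlip (x + u) x
    simpa [hE3def, pow_one] using this
  have b2 : ∀ u : ℝ, |E2 u| ≤ L / 2 * |u| ^ 2 := by
    intro u
    have := poly_bound E2 E3 hE2 (by simp [hE2def, hb]) L 1 b3 u
    norm_num at this
    rw [sq_abs]
    linarith
  have b1 : ∀ u : ℝ, |E1 u| ≤ L / 6 * |u| ^ 3 := by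
    intro u
    have := poly_bound E1 E2 hE1 (by simp [hE1def, ha]) (L / 2) 2 b2 u
    norm_num at this
    linarith
  have b0 : |E0 t| ≤ L / 24 * t ^ 4 := by
    have := poly_bound E0 E1 hE0 (by simp [hE0def]) (L / 6) 3 b1 t
    norm_num at this
    have ht4 : |t| ^ 4 = t ^ 4 := by
      rw [← abs_pow, abs_of_nonneg (by positivity)]
    rw [ht4] at this
    linarith
  have heq : h (x + t) - h x - a * t - b * t ^ 2 / 2 - c * t ^ 3 / 6 = E0 t := by
    simp only [hE0def]; ring
  rw [heq]
  linarith

set_option maxHeartbeats 1000000 in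
/-- One-dimensional cubic-interpolation lemma for exploiting approximate negative
curvature under a Lipschitz third derivative. -/
theorem cubic_approx_negative_curvature
    (h : ℝ → ℝ) (L : ℝ) (hL : 0 < L)
    (hd1 : Differentiable ℝ h)
    (hd2 : Differentiable ℝ (deriv h))
    (hd3 : Differentiable ℝ (deriv (deriv h)))
    (hlip : ∀ ξ₁ ξ₂ : ℝ,
      |deriv (deriv (deriv h)) ξ₁ - deriv (deriv (deriv h)) ξ₂| ≤ L * |ξ₁ - ξ₂|)
    (A : ℝ) (hA : 0 ≤ A)
    (hnc : h 1 - h (-1) - 2 * deriv h (-1) ≤ -A)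
    (ρ : ℝ) (hρ : 4 ≤ ρ) :
    min (h (-1 - ρ)) (h (1 + (Real.sqrt (ρ * (ρ + 2)) - 2))) ≤
      max (h (-1) - A / 4 * ρ ^ 2) (h 1 - A / 6 * ρ ^ 2) + L / 8 * ρ ^ 4 := by
  set a := deriv h (-1) with ha
  set b := deriv (deriv h) (-1) with hb
  set c := deriv (deriv (deriv h)) (-1) with hc
  set s := Real.sqrt (ρ * (ρ + 2)) with hs
  have hρ0 : (0:ℝ) < ρ := by linarith
  have hs0 : 0 ≤ s := Real.sqrt_nonneg _
  have hs2 : s ^ 2 = ρ * (ρ + 2) := Real.sq_sqrt (by nlinarith)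
  have hs4 : s ^ 4 = (ρ * (ρ + 2)) ^ 2 := by
    rw [show s ^ 4 = (s ^ 2) ^ 2 by ring, hs2]
  have hsge2 : 2 ≤ s := by nlinarith [hs2, hs0]
  have hρ2 : 16 ≤ ρ ^ 2 := by nlinarith
  -- Taylor bounds at x = -1
  have T := taylor_third h L hd1 hd2 hd3 hlip (-1)
  have T2 := T 2
  rw [show (-1:ℝ) + 2 = 1 by norm_num] at T2
  have T2l := (abs_le.mp T2).1
  have Tl := T (-ρ)
  rw [show (-1:ℝ) + -ρ = -1 - ρ by ring] at Tl
  have Tll := (abs_le.mp Tl).2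
  have Tr := T s
  have Trr := (abs_le.mp Tr).2
  -- key bound on averaged curvature
  have hB : b + 2 / 3 * c ≤ -A / 2 + L / 3 := by
    have : (2:ℝ) ^ 4 = 16 := by norm_num
    linarith [T2l, hnc]
  have hm1 : h (-1) ≤ h 1 - 2 * a - 2 * (b + 2 / 3 * c) + 2 / 3 * L := by
    linarith [T2l]
  have hpt : (1 : ℝ) + (s - 2) = -1 + s := by ring
  rcases le_or_gt 0 (a + c * s ^ 2 / 6) with hcase | hcase
  · -- go left
    have Tll' : h (-1 - ρ) ≤ h (-1) + (-(a * ρ) + b * ρ ^ 2 / 2 - c * ρ ^ 3 / 6)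
        + L * ρ ^ 4 / 24 := by linarith [Tll]
    rw [hs2] at hcase
    have t1 : 0 ≤ ρ * (a + c * (ρ * (ρ + 2)) / 6) := mul_nonneg hρ0.le hcase
    have t2 : (b + 2 / 3 * c) * (ρ ^ 2 / 2) ≤ (-A / 2 + L / 3) * (ρ ^ 2 / 2) :=
      mul_le_mul_of_nonneg_right hB (by positivity)
    have h1 : -(a * ρ) + b * ρ ^ 2 / 2 - c * ρ ^ 3 / 6
        ≤ (-A / 2 + L / 3) * (ρ ^ 2 / 2) := by nlinarith [t1, t2, hs2]
    have h2 : (-A / 2 + L / 3) * (ρ ^ 2 / 2) + L * ρ ^ 4 / 24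
        ≤ -(A / 4 * ρ ^ 2) + L / 8 * ρ ^ 4 := by
      nlinarith [mul_nonneg (mul_nonneg hL.le (sq_nonneg ρ))
        (show (0:ℝ) ≤ ρ ^ 2 - 2 by linarith)]
    have key : h (-1 - ρ) ≤ h (-1) - A / 4 * ρ ^ 2 + L / 8 * ρ ^ 4 := by
      linarith [Tll', h1, h2]
    calc min (h (-1 - ρ)) (h (1 + (s - 2))) ≤ h (-1 - ρ) := min_le_left _ _
      _ ≤ h (-1) - A / 4 * ρ ^ 2 + L / 8 * ρ ^ 4 := key
      _ ≤ max (h (-1) - A / 4 * ρ ^ 2) (h 1 - A / 6 * ρ ^ 2) + L / 8 * ρ ^ 4 := by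
          have := le_max_left (h (-1) - A / 4 * ρ ^ 2) (h 1 - A / 6 * ρ ^ 2)
          linarith
  · -- go right
    have Trr' : h (-1 + s) ≤ h (-1) + (a * s + b * s ^ 2 / 2 + c * s ^ 3 / 6)
        + L * s ^ 4 / 24 := by linarith [Trr]
    have id2 : a * s + b * s ^ 2 / 2 + c * s ^ 3 / 6
        = (s - 2) * (a + c * s ^ 2 / 6) + 2 * a + (b + 2 / 3 * c) * (s ^ 2 / 2) := by ring
    have t1 : (s - 2) * (a + c * s ^ 2 / 6) ≤ 0 :=
      mul_nonpos_of_nonneg_of_nonpos (by linarith) hcase.le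
    have step1 : a * s + b * s ^ 2 / 2 + c * s ^ 3 / 6
        ≤ 2 * a + (b + 2 / 3 * c) * (s ^ 2 / 2) := by linarith [id2, t1]
    have step2 : h (-1 + s) ≤ h 1 + (b + 2 / 3 * c) * (s ^ 2 / 2 - 2) + 2 / 3 * L
        + L * s ^ 4 / 24 := by linarith [Trr', step1, hm1]
    have h22 : (0:ℝ) ≤ s ^ 2 / 2 - 2 := by nlinarith [hs2]
    have t2 : (b + 2 / 3 * c) * (s ^ 2 / 2 - 2) ≤ (-A / 2 + L / 3) * (s ^ 2 / 2 - 2) :=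
      mul_le_mul_of_nonneg_right hB h22
    have hApart : A / 6 * ρ ^ 2 ≤ A / 4 * (s ^ 2 - 4) := by
      rw [hs2]
      nlinarith [mul_nonneg hA (show (0:ℝ) ≤ ρ ^ 2 / 12 + ρ / 2 - 1 by nlinarith)]
    have p3 : 4 * ρ ^ 3 ≤ ρ ^ 4 := by
      nlinarith [mul_nonneg (show (0:ℝ) ≤ ρ ^ 3 by positivity) (show (0:ℝ) ≤ ρ - 4 by linarith)]
    have p2 : 8 * ρ ^ 2 + 8 * ρ ≤ ρ ^ 4 := by
      nlinarith [mul_nonneg (sq_nonneg ρ) (show (0:ℝ) ≤ ρ ^ 2 - 16 by linarith)]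
    have hq : (ρ * (ρ + 2)) / 6 + (ρ * (ρ + 2)) ^ 2 / 24 ≤ ρ ^ 4 / 8 := by linarith [p3, p2]
    have hLpart : L / 3 * (s ^ 2 / 2 - 2) + 2 / 3 * L + L * s ^ 4 / 24
        ≤ L / 8 * ρ ^ 4 := by
      rw [hs2, hs4]
      linarith [mul_le_mul_of_nonneg_left hq hL.le]
    have key : h (-1 + s) ≤ h 1 - A / 6 * ρ ^ 2 + L / 8 * ρ ^ 4 := by
      linarith [step2, t2, hApart, hLpart]
    calc min (h (-1 - ρ)) (h (1 + (s - 2))) ≤ h (1 + (s - 2)) := min_le_right _ _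
      _ = h (-1 + s) := by rw [hpt]
      _ ≤ h 1 - A / 6 * ρ ^ 2 + L / 8 * ρ ^ 4 := key
      _ ≤ max (h (-1) - A / 4 * ρ ^ 2) (h 1 - A / 6 * ρ ^ 2) + L / 8 * ρ ^ 4 := by
          have := le_max_right (h (-1) - A / 4 * ρ ^ 2) (h 1 - A / 6 * ρ ^ 2)
          linarith
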